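/- For every v ∈ ℝ, ∂f̃_a/∂v (0, v) = (−2 sin v / √(2cos 4v + a⁴ + a⁻⁴))·(0, 0, 1); hence the curve v ↦ f̃_a(0,v) for 0 < v < π traces a line segment parallel to the x₂-axis. -/

import Mathlib

open Real

noncomputable def xi (a t : ℝ) : ℝ :=
  2 / Real.sqrt (2 * Real.cos (4 * t) + (a ^ 4 + (a ^ 4)⁻¹))

noncomputable def gam (a : ℝ) (s : ℝ) : ℝ × ℝ × ℝ :=
  (∫ t in (0:ℝ)..s, xi a t,
   ∫ t in (0:ℝ)..s, -(xi a t * Real.cos t),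
   ∫ t in (0:ℝ)..s, -(xi a t * Real.sin t))

noncomputable def ftilde (a : ℝ) (u v : ℝ) : ℝ × ℝ × ℝ :=
  (1/2 : ℝ) • (gam a (u + v) + gam a (u - v))

lemma denom_pos {a : ℝ} (ha : a ∈ Set.Ioo (0:ℝ) 1) (t : ℝ) :
    0 < 2 * Real.cos (4 * t) + (a ^ 4 + (a ^ 4)⁻¹) := by
  obtain ⟨ha0, ha1⟩ := ha
  have hx : 0 < a ^ 4 := by positivity
  have hx1 : a ^ 4 < 1 := pow_lt_one₀ (le_of_lt ha0) ha1 (by norm_num)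
  have hinv : a ^ 4 * (a ^ 4)⁻¹ = 1 := mul_inv_cancel₀ (ne_of_gt hx)
  have hc : -1 ≤ Real.cos (4 * t) := Real.neg_one_le_cos _
  have hip : 0 < (a ^ 4)⁻¹ := inv_pos.mpr hx
  nlinarith [mul_pos (sub_pos.mpr hx1) (sub_pos.mpr hx1)]

lemma cont_xi {a : ℝ} (ha : a ∈ Set.Ioo (0:ℝ) 1) : Continuous (xi a) := by
  apply Continuous.div continuous_const
  · exact Real.continuous_sqrt.comp (by continuity)
  · intro t
    exact ne_of_gt (Real.sqrt_pos.mpr (denom_pos ha t))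

lemma xi_even {a : ℝ} (t : ℝ) : xi a (-t) = xi a t := by
  simp [xi, mul_neg, Real.cos_neg]

lemma hasDerivAt_int (f : ℝ → ℝ) (hf : Continuous f) (v : ℝ) :
    HasDerivAt (fun u => ∫ t in (0:ℝ)..u, f t) (f v) v :=
  intervalIntegral.integral_hasDerivAt_right (hf.intervalIntegrable _ _)
    (hf.stronglyMeasurableAtFilter _ _) hf.continuousAt

lemma comp_deriv (f : ℝ → ℝ) (hf : Continuous f) (v : ℝ) :
    HasDerivAt (fun u => (1/2 : ℝ) * ((∫ t in (0:ℝ)..u, f t) + ∫ t in (0:ℝ)..(-u), f t))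
      ((1/2) * (f v - f (-v))) v := by
  have h1 := hasDerivAt_int f hf v
  have h2 := (hasDerivAt_int f hf (-v)).comp v (hasDerivAt_neg v)
  have h3 := (h1.add h2).const_mul (1/2 : ℝ)
  refine h3.congr_deriv ?_
  ring

lemma int_neg_even (f : ℝ → ℝ) (hf : ∀ t, f (-t) = f t) (w : ℝ) :
    (∫ t in (0:ℝ)..(-w), f t) = - ∫ t in (0:ℝ)..w, f t := by
  have h := intervalIntegral.integral_comp_neg (a := (0:ℝ)) (b := w) (f := f)
  simp only [hf, neg_zero] at h
  rw [h]
  rw [intervalIntegral.integral_symm]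

theorem statement7 (a : ℝ) (ha : a ∈ Set.Ioo (0:ℝ) 1) :
    (∀ v : ℝ, HasDerivAt (fun v' => ftilde a 0 v')
      ((-2 * Real.sin v / Real.sqrt (2 * Real.cos (4 * v) + (a ^ 4 + (a ^ 4)⁻¹))) •
        ((0:ℝ), (0:ℝ), (1:ℝ))) v) ∧
    (∀ v ∈ Set.Ioo 0 π, (ftilde a 0 v).1 = (ftilde a 0 (π / 2)).1 ∧
      (ftilde a 0 v).2.1 = (ftilde a 0 (π / 2)).2.1) := by
  have hxi := cont_xi ha
  have hf2 : Continuous (fun t => -(xi a t * Real.cos t)) := by continuity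
  have hf3 : Continuous (fun t => -(xi a t * Real.sin t)) := by continuity
  have hfun : ∀ v' : ℝ, ftilde a 0 v' =
      ((1/2 : ℝ) * ((∫ t in (0:ℝ)..v', xi a t) + ∫ t in (0:ℝ)..(-v'), xi a t),
       (1/2 : ℝ) * ((∫ t in (0:ℝ)..v', -(xi a t * Real.cos t)) +
          ∫ t in (0:ℝ)..(-v'), -(xi a t * Real.cos t)),
       (1/2 : ℝ) * ((∫ t in (0:ℝ)..v', -(xi a t * Real.sin t)) +
          ∫ t in (0:ℝ)..(-v'), -(xi a t * Real.sin t))) := by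
    intro v'
    simp [ftilde, gam, Prod.mk_add_mk, Prod.smul_mk, smul_eq_mul, zero_add, zero_sub]
  constructor
  · intro v
    have h1 := comp_deriv _ hxi v
    have h2 := comp_deriv _ hf2 v
    have h3 := comp_deriv _ hf3 v
    have h := h1.prodMk (h2.prodMk h3)
    have heq : (fun v' => ftilde a 0 v') = fun v' =>
        ((1/2 : ℝ) * ((∫ t in (0:ℝ)..v', xi a t) + ∫ t in (0:ℝ)..(-v'), xi a t),
         (1/2 : ℝ) * ((∫ t in (0:ℝ)..v', -(xi a t * Real.cos t)) +
            ∫ t in (0:ℝ)..(-v'), -(xi a t * Real.cos t)),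
         (1/2 : ℝ) * ((∫ t in (0:ℝ)..v', -(xi a t * Real.sin t)) +
            ∫ t in (0:ℝ)..(-v'), -(xi a t * Real.sin t))) := funext hfun
    rw [heq]
    convert h using 1
    have hs : Real.sqrt (2 * Real.cos (4 * v) + (a ^ 4 + (a ^ 4)⁻¹)) ≠ 0 :=
      ne_of_gt (Real.sqrt_pos.mpr (denom_pos ha v))
    simp only [Prod.smul_mk, smul_eq_mul, Prod.mk.injEq]
    refine ⟨?_, ?_, ?_⟩
    · rw [xi_even]; ring
    · rw [show xi a (-v) = xi a v from xi_even v, Real.cos_neg]; ring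
    · rw [show xi a (-v) = xi a v from xi_even v, Real.sin_neg, xi]
      field_simp
      ring
  · intro v hv
    have key : ∀ w : ℝ, (ftilde a 0 w).1 = 0 ∧ (ftilde a 0 w).2.1 = 0 := by
      intro w
      rw [hfun w]
      constructor
      · simp only
        rw [int_neg_even _ xi_even w]
        ring
      · simp only
        rw [int_neg_even (fun t => -(xi a t * Real.cos t))
          (fun t => by simp [xi_even, Real.cos_neg]) w]
        ring
    exact ⟨(key v).1.trans (key (π/2)).1.symm, (key v).2.trans (key (π/2)).2.symm⟩
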